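/- Let (A, ‖·‖) be a non-unital semisimple Banach algebra with the spectral extension property. Suppose that every algebra norm on A_e majorizes a minimal algebra norm, and that for every minimal algebra norm |·| on A_e one has |·|_op ≅ |·|₁ (the operator and ℓ¹-norms on A_e induced by the restriction of |·| to A are equivalent). Then A_e has the spectral extension property: every algebra norm on A_e is a Q-norm. -/

import Mathlib

/-- A submultiplicative algebra norm on a (possibly non-unital) complex algebra. -/
structure AlgNorm (A : Type*) [NonUnitalRing A] [Module ℂ A]
    extends RingNorm A where
  smul' : ∀ (c : ℂ) (x : A), toFun (c • x) = ‖c‖ * toFun x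

/-- The spectral radius in a non-unital complex algebra, via the quasispectrum. -/
noncomputable def quasiRadius {A : Type*} [NonUnitalRing A] [Module ℂ A]
    [IsScalarTower ℂ A A] [SMulCommClass ℂ A A] (a : A) : ENNReal :=
  ⨆ k ∈ quasispectrum ℂ a, (‖k‖₊ : ENNReal)

variable {A : Type*} [NonUnitalNormedRing A] [NormedSpace ℂ A]
  [IsScalarTower ℂ A A] [SMulCommClass ℂ A A]

/-- The operator norm on `A_e` induced by the restriction to `A` of a norm `q` on
`A_e`: `|a + λ1|_op = sup {|ax + λx| : |x| ≤ 1}`. -/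
noncomputable def qOp (q : AlgNorm (Unitization ℂ A)) (z : Unitization ℂ A) : ℝ :=
  sSup {r : ℝ | ∃ x : A, q.toRingNorm (x : Unitization ℂ A) ≤ 1 ∧
    r = q.toRingNorm (z * (x : Unitization ℂ A))}

/-- The ℓ¹-norm on `A_e` induced by the restriction to `A` of a norm `q` on `A_e`:
`|a + λ1|₁ = |a| + |λ|`. -/
noncomputable def qL1 (q : AlgNorm (Unitization ℂ A)) (z : Unitization ℂ A) : ℝ :=
  q.toRingNorm ((z.snd : A) : Unitization ℂ A) + ‖z.fst‖

/-- A norm is minimal if every algebra norm dominated by it coincides with it. -/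
def IsMinimalNorm (q : AlgNorm (Unitization ℂ A)) : Prop :=
  ∀ r : AlgNorm (Unitization ℂ A), (∀ z, r.toRingNorm z ≤ q.toRingNorm z) →
    ∀ z, r.toRingNorm z = q.toRingNorm z

/-- Auxiliary: if `aⁿ ≤ C·bⁿ` for all `n ≥ 1` with `C > 0`, then `a ≤ b`. -/
lemma le_of_pow_le_mul_pow_aux {a b C : ℝ} (ha : 0 ≤ a) (hb : 0 ≤ b) (hC : 0 < C)
    (h : ∀ n : ℕ, 1 ≤ n → a ^ n ≤ C * b ^ n) : a ≤ b := by
  by_contra hab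
  push_neg at hab
  have ha0 : 0 < a := hb.trans_lt hab
  rcases hb.eq_or_lt with hb0 | hb0
  · have h1 := h 1 le_rfl
    rw [pow_one, pow_one, ← hb0, mul_zero] at h1
    exact absurd h1 (not_le.mpr ha0)
  · have h1 : 1 < a / b := (one_lt_div hb0).mpr hab
    obtain ⟨n, hCn, hn1⟩ :=
      (((tendsto_pow_atTop_atTop_of_one_lt h1).eventually_gt_atTop C).and
        (Filter.eventually_ge_atTop 1)).exists
    have hle : (a / b) ^ n ≤ C := by
      rw [div_pow, div_le_iff₀ (pow_pos hb0 n)]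
      exact h n hn1
    exact absurd hle (not_le.mpr hCn)

/-- The restriction of an algebra norm on `A_e` to `A`. -/
noncomputable def AlgNorm.restrictUnitization (q : AlgNorm (Unitization ℂ A)) : AlgNorm A where
  toFun x := q.toRingNorm (x : Unitization ℂ A)
  map_zero' := by simpa using q.toRingNorm.map_zero'
  add_le' x y := by
    simpa [Unitization.inr_add] using map_add_le_add q.toRingNorm (x : Unitization ℂ A) y
  neg' x := by simpa [Unitization.inr_neg] using q.toRingNorm.neg' (x : Unitization ℂ A)
  mul_le' x y := by
    simpa [Unitization.inr_mul] using map_mul_le_mul q.toRingNorm (x : Unitization ℂ A) y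
  eq_zero_of_map_eq_zero' x hx := by
    have h0 := q.toRingNorm.eq_zero_of_map_eq_zero' _ hx
    exact Unitization.inr_injective (by simpa using h0)
  smul' c x := by
    show q.toRingNorm (((c • x : A) : Unitization ℂ A)) = ‖c‖ * q.toRingNorm (x : Unitization ℂ A)
    rw [Unitization.inr_smul]
    exact q.smul' c ((x : A) : Unitization ℂ A)

/-- Let `A` be a non-unital semisimple Banach algebra with the spectral extension
property.  If every algebra norm on `A_e` majorizes a minimal norm and, for every
minimal norm `|·|` on `A_e`, the induced operator and ℓ¹-norms on `A_e` are equivalent,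
then `A_e` has the spectral extension property. -/
theorem sep_unitization_of_opNorm_equiv_l1Norm
    (A : Type*) [NonUnitalNormedRing A] [NormedSpace ℂ A]
    [IsScalarTower ℂ A A] [SMulCommClass ℂ A A] [CompleteSpace A]
    (hA : ¬ ∃ e : A, ∀ x : A, e * x = x ∧ x * e = x)
    (hss : ∀ a : A, (∀ x : A, quasiRadius (x * a) = 0) → a = 0)
    (hSEP : ∀ p : AlgNorm A, ∀ a : A,
      quasiRadius a ≤ ENNReal.ofReal (p.toRingNorm a))
    (hmin : ∀ p : AlgNorm (Unitization ℂ A), ∃ q : AlgNorm (Unitization ℂ A),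
      (∀ z, q.toRingNorm z ≤ p.toRingNorm z) ∧ IsMinimalNorm q)
    (hequiv : ∀ q : AlgNorm (Unitization ℂ A), IsMinimalNorm q →
      ∃ C : ℝ, 0 < C ∧ ∀ z : Unitization ℂ A,
        qOp q z ≤ C * qL1 q z ∧ qL1 q z ≤ C * qOp q z) :
    ∀ p : AlgNorm (Unitization ℂ A), ∀ z : Unitization ℂ A,
      (⨆ k ∈ spectrum ℂ z, (‖k‖₊ : ENNReal)) ≤ ENNReal.ofReal (p.toRingNorm z) := by
  intro p z
  obtain ⟨q, hqp, hqmin⟩ := hmin p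
  obtain ⟨C, hC, hCq⟩ := hequiv q hqmin
  -- Every point of the spectrum of `w` is bounded in norm by `qL1 q w`.
  have key : ∀ w : Unitization ℂ A, ∀ k ∈ spectrum ℂ w, ‖k‖ ≤ qL1 q w := by
    intro w k hk
    have hw : (algebraMap ℂ (Unitization ℂ A)) w.fst + ((w.snd : A) : Unitization ℂ A) = w := by
      simpa [Unitization.algebraMap_eq_inl] using Unitization.inl_fst_add_inr_snd_eq w
    rw [← hw, ← spectrum.singleton_add_eq] at hk
    obtain ⟨r, hr, ν, hν, hrν⟩ := Set.mem_add.mp hk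
    rw [Set.mem_singleton_iff] at hr
    subst hr
    rw [← Unitization.quasispectrum_eq_spectrum_inr ℂ] at hν
    have hν' : ‖ν‖ ≤ q.toRingNorm ((w.snd : A) : Unitization ℂ A) := by
      have h1 : (‖ν‖₊ : ENNReal) ≤ quasiRadius w.snd :=
        le_iSup₂ (f := fun k (_ : k ∈ quasispectrum ℂ w.snd) => (‖k‖₊ : ENNReal)) ν hν
      have h2 : (‖ν‖₊ : ENNReal) ≤
          ENNReal.ofReal ((AlgNorm.restrictUnitization q).toRingNorm w.snd) :=
        h1.trans (hSEP (AlgNorm.restrictUnitization q) w.snd)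
      rw [← ENNReal.ofReal_coe_nnreal, coe_nnnorm] at h2
      exact (ENNReal.ofReal_le_ofReal_iff (apply_nonneg _ _)).mp h2
    calc ‖k‖ = ‖w.fst + ν‖ := by rw [hrν]
      _ ≤ ‖w.fst‖ + ‖ν‖ := norm_add_le _ _
      _ ≤ ‖w.fst‖ + q.toRingNorm ((w.snd : A) : Unitization ℂ A) := by linarith
      _ = qL1 q w := by rw [qL1, add_comm]
  -- The operator norm is dominated by `q` itself.
  have hqOp_le : ∀ w : Unitization ℂ A, qOp q w ≤ q.toRingNorm w := by
    intro w
    apply Real.sSup_le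
    · rintro r ⟨x, hx, rfl⟩
      calc q.toRingNorm (w * (x : Unitization ℂ A))
          ≤ q.toRingNorm w * q.toRingNorm (x : Unitization ℂ A) := q.toRingNorm.mul_le' _ _
        _ ≤ q.toRingNorm w * 1 := mul_le_mul_of_nonneg_left hx (apply_nonneg _ _)
        _ = q.toRingNorm w := mul_one _
    · exact apply_nonneg _ _
  refine iSup₂_le fun k hk => ?_
  have hpow : ∀ n : ℕ, 1 ≤ n → ‖k‖ ^ n ≤ C * p.toRingNorm z ^ n := by
    intro n hn1
    have hkn : k ^ n ∈ spectrum ℂ (z ^ n) := spectrum.pow_image_subset z n ⟨k, hk, rfl⟩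
    calc ‖k‖ ^ n = ‖k ^ n‖ := (norm_pow k n).symm
      _ ≤ qL1 q (z ^ n) := key _ _ hkn
      _ ≤ C * qOp q (z ^ n) := (hCq _).2
      _ ≤ C * q.toRingNorm (z ^ n) := mul_le_mul_of_nonneg_left (hqOp_le _) hC.le
      _ ≤ C * q.toRingNorm z ^ n := mul_le_mul_of_nonneg_left
          (map_pow_le_pow q.toRingNorm z (Nat.one_le_iff_ne_zero.mp hn1)) hC.le
      _ ≤ C * p.toRingNorm z ^ n := mul_le_mul_of_nonneg_left
          (pow_le_pow_left₀ (apply_nonneg _ _) (hqp z) n) hC.le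
  have hfin : ‖k‖ ≤ p.toRingNorm z :=
    le_of_pow_le_mul_pow_aux (norm_nonneg k) (apply_nonneg _ _) hC hpow
  rw [← ENNReal.ofReal_coe_nnreal, coe_nnnorm]
  exact ENNReal.ofReal_le_ofReal hfin
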